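/- Let A and B be m×n complex matrices and E = B − A. Define γ′₁ := (‖A†E‖_F² − ‖B‖₂²‖A†EB†‖_F²)/‖A‖₂² + (‖EB†‖_F² − ‖A‖₂²‖A†EB†‖_F²)/‖B‖₂² and γ′₂ := (‖EA†‖_F² − ‖B‖₂²‖B†EA†‖_F²)/‖A‖₂² + (‖B†E‖_F² − ‖A‖₂²‖B†EA†‖_F²)/‖B‖₂². Then ‖B† − A†‖_F² ≥ max{γ′₁ + ‖B†EA†‖_F², γ′₂ + ‖A†EB†‖_F²}. -/

import Mathlib

open Matrix

/-- The square of the Frobenius norm of a complex matrix. -/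
noncomputable def frobSq {α β : Type*} [Fintype α] [Fintype β] (M : Matrix α β ℂ) : ℝ :=
  ∑ i, ∑ j, ‖M i j‖ ^ 2

/-- The spectral norm (ℓ²-operator norm) of a complex matrix. -/
noncomputable def spec {α β : Type*} [Fintype α] [Fintype β] [DecidableEq β]
    (M : Matrix α β ℂ) : ℝ :=
  ‖LinearMap.toContinuousLinearMap (Matrix.toEuclideanLin M)‖

/-- `X` is the Moore–Penrose inverse of `M` (the four Penrose equations). -/
def IsMoorePenrose {α β : Type*} [Fintype α] [Fintype β]
    (M : Matrix α β ℂ) (X : Matrix β α ℂ) : Prop :=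
  M * X * M = M ∧ X * M * X = X ∧ (M * X)ᴴ = M * X ∧ (X * M)ᴴ = X * M

section Aux

open scoped Matrix.Norms.L2Operator

variable {α β γ : Type*} [Fintype α] [Fintype β] [Fintype γ]

lemma frobSq_nonneg (M : Matrix α β ℂ) : 0 ≤ frobSq M :=
  Finset.sum_nonneg fun _ _ => Finset.sum_nonneg fun _ _ => sq_nonneg _

lemma frobSq_conjTranspose (M : Matrix α β ℂ) : frobSq Mᴴ = frobSq M := by
  rw [frobSq, Finset.sum_comm]; simp [frobSq, conjTranspose_apply]

lemma frobSq_neg (M : Matrix α β ℂ) : frobSq (-M) = frobSq M := by simp [frobSq]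

lemma frobSq_eq_re_trace (M : Matrix α β ℂ) :
    frobSq M = (Matrix.trace (Mᴴ * M)).re := by
  rw [frobSq, Finset.sum_comm]
  simp [Matrix.trace, Matrix.diag, Matrix.mul_apply, conjTranspose_apply, Complex.conj_mul',
    ← Complex.ofReal_pow, Complex.sq_norm]

lemma frobSq_proj_left [DecidableEq α] (Q : Matrix α α ℂ) (hQH : Qᴴ = Q) (hQ2 : Q * Q = Q)
    (X : Matrix α β ℂ) : frobSq (Q * X) + frobSq ((1 - Q) * X) = frobSq X := by
  have key : ∀ Y : Matrix α β ℂ, Q * (Q * Y) = Q * Y := fun Y => by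
    rw [← Matrix.mul_assoc, hQ2]
  have hmat : (Q * X)ᴴ * (Q * X) + ((1 - Q) * X)ᴴ * ((1 - Q) * X) = Xᴴ * X := by
    simp only [conjTranspose_mul, conjTranspose_sub, conjTranspose_one, hQH,
      Matrix.sub_mul, Matrix.mul_sub, Matrix.one_mul, Matrix.mul_one, Matrix.mul_assoc, key]
    abel
  rw [frobSq_eq_re_trace, frobSq_eq_re_trace, frobSq_eq_re_trace, ← Complex.add_re,
    ← Matrix.trace_add, hmat]

lemma frobSq_proj_right [DecidableEq β] (P : Matrix β β ℂ) (hPH : Pᴴ = P) (hP2 : P * P = P)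
    (X : Matrix α β ℂ) : frobSq (X * P) + frobSq (X * (1 - P)) = frobSq X := by
  have h1 : (1 - P)ᴴ = 1 - P := by rw [conjTranspose_sub, conjTranspose_one, hPH]
  rw [← frobSq_conjTranspose (X * P), ← frobSq_conjTranspose (X * (1 - P)),
    ← frobSq_conjTranspose X, conjTranspose_mul, conjTranspose_mul, hPH, h1]
  exact frobSq_proj_left P hPH hP2 Xᴴ

lemma euclid_norm_sq (v : EuclideanSpace ℂ α) : ‖v‖ ^ 2 = ∑ i, ‖v i‖ ^ 2 := by
  rw [EuclideanSpace.norm_eq, Real.sq_sqrt (by positivity)]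

lemma frobSq_eq_sum_cols (Y : Matrix α β ℂ) :
    frobSq Y = ∑ j, ‖((WithLp.equiv 2 (α → ℂ)).symm fun i => Y i j : EuclideanSpace ℂ α)‖ ^ 2 := by
  rw [frobSq, Finset.sum_comm]
  simp [euclid_norm_sq]

lemma spec_eq_l2norm [DecidableEq β] (M : Matrix α β ℂ) : spec M = ‖M‖ := rfl

lemma spec_nonneg [DecidableEq β] (M : Matrix α β ℂ) : 0 ≤ spec M := norm_nonneg _

lemma spec_pos [DecidableEq β] {M : Matrix α β ℂ} (h : M ≠ 0) : 0 < spec M := by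
  rw [spec_eq_l2norm]; exact norm_pos_iff.mpr h

lemma spec_conjTranspose [DecidableEq α] [DecidableEq β] (M : Matrix α β ℂ) :
    spec Mᴴ = spec M := by
  rw [spec_eq_l2norm, spec_eq_l2norm]; exact Matrix.l2_opNorm_conjTranspose M

lemma frobSq_mul_le_left [DecidableEq β] (M : Matrix α β ℂ) (X : Matrix β γ ℂ) :
    frobSq (M * X) ≤ spec M ^ 2 * frobSq X := by
  rw [frobSq_eq_sum_cols (M * X), frobSq_eq_sum_cols X, Finset.mul_sum]
  apply Finset.sum_le_sum
  intro j _
  have h1 : ((WithLp.equiv 2 (α → ℂ)).symm fun i => (M * X) i j : EuclideanSpace ℂ α)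
      = (EuclideanSpace.equiv α ℂ).symm
        (M *ᵥ ((WithLp.equiv 2 (β → ℂ)).symm fun k => X k j : EuclideanSpace ℂ β)) := by
    ext i
    simp [Matrix.mul_apply, Matrix.mulVec, dotProduct]
  rw [h1]
  have h2 := Matrix.l2_opNorm_mulVec M ((WithLp.equiv 2 (β → ℂ)).symm fun k => X k j)
  calc ‖(EuclideanSpace.equiv α ℂ).symm
        (M *ᵥ ((WithLp.equiv 2 (β → ℂ)).symm fun k => X k j : EuclideanSpace ℂ β))‖ ^ 2
      ≤ (‖M‖ * ‖((WithLp.equiv 2 (β → ℂ)).symm fun k => X k j : EuclideanSpace ℂ β)‖) ^ 2 := by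
        apply pow_le_pow_left₀ (norm_nonneg _) h2
    _ = spec M ^ 2 * ‖((WithLp.equiv 2 (β → ℂ)).symm fun k => X k j : EuclideanSpace ℂ β)‖ ^ 2 := by
        rw [mul_pow, spec_eq_l2norm]

lemma frobSq_mul_le_right [DecidableEq β] [DecidableEq γ] (X : Matrix α β ℂ) (M : Matrix β γ ℂ) :
    frobSq (X * M) ≤ frobSq X * spec M ^ 2 := by
  have h : frobSq (X * M) = frobSq (Mᴴ * Xᴴ) := by
    rw [← conjTranspose_mul, frobSq_conjTranspose]
  rw [h]
  calc frobSq (Mᴴ * Xᴴ) ≤ spec Mᴴ ^ 2 * frobSq Xᴴ := frobSq_mul_le_left _ _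
    _ = frobSq X * spec M ^ 2 := by rw [spec_conjTranspose, frobSq_conjTranspose]; ring

end Aux

section Key

variable {m n : ℕ}

lemma key_branch (A B : Matrix (Fin m) (Fin n) ℂ)
    (Adag Bdag : Matrix (Fin n) (Fin m) ℂ)
    (hA : IsMoorePenrose A Adag) (hB : IsMoorePenrose B Bdag)
    (E : Matrix (Fin m) (Fin n) ℂ) (hE : E = B - A)
    (hA0 : A ≠ 0) (hB0 : B ≠ 0) :
    frobSq (Bdag - Adag) ≥
      (frobSq (Adag * E) - spec B ^ 2 * frobSq (Adag * E * Bdag)) / spec A ^ 2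
        + (frobSq (E * Bdag) - spec A ^ 2 * frobSq (Adag * E * Bdag)) / spec B ^ 2
        + frobSq (Bdag * E * Adag) := by
  obtain ⟨hA1, hA2, hA3, hA4⟩ := hA
  obtain ⟨hB1, hB2, hB3, hB4⟩ := hB
  set F := Bdag - Adag with hF
  set Q := Bdag * B with hQ
  set P := A * Adag with hP
  have hQH : Qᴴ = Q := hB4
  have hPH : Pᴴ = P := hA3
  have hQ2 : Q * Q = Q := by
    rw [hQ, Matrix.mul_assoc, ← Matrix.mul_assoc B Bdag B, hB1]
  have hP2 : P * P = P := by
    rw [hP, Matrix.mul_assoc, ← Matrix.mul_assoc Adag A Adag, hA2]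
  have sA := spec_pos hA0
  have sB := spec_pos hB0
  -- generalized Penrose rewrites
  have ga2 : ∀ (Y : Matrix (Fin m) (Fin n) ℂ), Adag * (A * (Adag * Y)) = Adag * Y := fun Y => by
    rw [← Matrix.mul_assoc, ← Matrix.mul_assoc, hA2]
  have gb2 : ∀ (γ : Type) (_ : Fintype γ) (Y : Matrix (Fin m) γ ℂ),
      Bdag * (B * (Bdag * Y)) = Bdag * Y := fun γ _ Y => by
    rw [← Matrix.mul_assoc, ← Matrix.mul_assoc, hB2]
  have gb2m := gb2 (Fin m) inferInstance
  have gb2n := gb2 (Fin n) inferInstance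
  have a2 : Adag * (A * Adag) = Adag := by rw [← Matrix.mul_assoc, hA2]
  have b2 : Bdag * (B * Bdag) = Bdag := by rw [← Matrix.mul_assoc, hB2]
  -- identities
  have idA : Q * F * P = -(Bdag * E * Adag) := by
    simp only [hF, hE, hQ, hP, Matrix.mul_sub, Matrix.sub_mul, Matrix.mul_assoc, gb2m, gb2n, a2]
    abel
  have idB : Q * F * (1 - P) = Bdag - Bdag * (A * Adag) := by
    simp only [hF, hQ, hP, Matrix.mul_sub, Matrix.sub_mul, Matrix.mul_one, Matrix.one_mul,
      Matrix.mul_assoc, gb2m, gb2n, a2, b2]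
    abel
  have hAh : Aᴴ * (A * Adag) = Aᴴ := by
    calc Aᴴ * (A * Adag) = Aᴴ * (A * Adag)ᴴ := by rw [hA3]
      _ = (A * Adag * A)ᴴ := by rw [conjTranspose_mul (A * Adag) A]
      _ = Aᴴ := by rw [hA1]
  have hBh : Q * Bᴴ = Bᴴ := by
    calc Q * Bᴴ = (Bdag * B)ᴴ * Bᴴ := by rw [hB4]
      _ = (B * (Bdag * B))ᴴ := by rw [conjTranspose_mul B (Bdag * B)]
      _ = Bᴴ := by rw [← Matrix.mul_assoc, hB1]
  have h1P : (1 - P)ᴴ = 1 - P := by rw [conjTranspose_sub, conjTranspose_one, hPH]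
  have hAP : Aᴴ * (1 - P) = 0 := by
    rw [Matrix.mul_sub, Matrix.mul_one, hP, hAh, sub_self]
  have idC : B * (Bdag - Bdag * (A * Adag)) = ((1 - P) * E * Bdag)ᴴ := by
    rw [conjTranspose_mul ((1 - P) * E) Bdag, conjTranspose_mul (1 - P) E, h1P, hE,
      conjTranspose_sub, Matrix.sub_mul Bᴴ Aᴴ (1 - P), hAP, sub_zero,
      ← Matrix.mul_assoc Bdagᴴ Bᴴ (1 - P), ← conjTranspose_mul B Bdag, hB3]
    simp only [Matrix.mul_sub, Matrix.mul_one, hP, Matrix.mul_assoc]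
  have idD : (1 - Q) * F * P = Bdag * (B * Adag) - Adag := by
    simp only [hF, hQ, hP, Matrix.mul_sub, Matrix.sub_mul, Matrix.mul_one, Matrix.one_mul,
      Matrix.mul_assoc, gb2m, gb2n, a2]
    abel
  have hBh2 : (1 - Q) * Bᴴ = 0 := by
    rw [Matrix.sub_mul, Matrix.one_mul, hBh, sub_self]
  have idE : (Bdag * (B * Adag) - Adag) * A = (Adag * E * (1 - Q))ᴴ := by
    have h1Q : (1 - Q)ᴴ = 1 - Q := by rw [conjTranspose_sub, conjTranspose_one, hQH]
    have hAA : Aᴴ * Adagᴴ = Adag * A := by rw [← conjTranspose_mul Adag A, hA4]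
    rw [conjTranspose_mul (Adag * E) (1 - Q), h1Q, conjTranspose_mul Adag E, hE,
      conjTranspose_sub, Matrix.sub_mul Bᴴ Aᴴ Adagᴴ, Matrix.mul_sub (1 - Q),
      ← Matrix.mul_assoc (1 - Q) Bᴴ Adagᴴ, hBh2, Matrix.zero_mul, hAA]
    simp only [Matrix.sub_mul, Matrix.one_mul, Matrix.mul_sub, hQ, Matrix.mul_assoc]
    abel
  -- decomposition
  have step1 : frobSq (Q * F) + frobSq ((1 - Q) * F) = frobSq F :=
    frobSq_proj_left Q hQH hQ2 F
  have step2 : frobSq (Q * F * P) + frobSq (Q * F * (1 - P)) = frobSq (Q * F) :=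
    frobSq_proj_right P hPH hP2 (Q * F)
  have step3 : frobSq ((1 - Q) * F * P) + frobSq ((1 - Q) * F * (1 - P)) = frobSq ((1 - Q) * F) :=
    frobSq_proj_right P hPH hP2 ((1 - Q) * F)
  have hlow : frobSq F ≥ frobSq (Q * F * P) + frobSq (Q * F * (1 - P))
      + frobSq ((1 - Q) * F * P) := by
    have h3 : frobSq ((1 - Q) * F * P) ≤ frobSq ((1 - Q) * F) := by
      rw [← step3]; linarith [frobSq_nonneg ((1 - Q) * F * (1 - P))]
    linarith [step1, step2]
  -- term 1 : frobSq (Q * F * P) = frobSq (Bdag * E * Adag)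
  have hT1 : frobSq (Q * F * P) = frobSq (Bdag * E * Adag) := by
    rw [idA, frobSq_neg]
  -- term 2
  have hT2 : frobSq (Q * F * (1 - P)) ≥
      (frobSq (E * Bdag) - spec A ^ 2 * frobSq (Adag * E * Bdag)) / spec B ^ 2 := by
    rw [idB]
    set T2 := Bdag - Bdag * (A * Adag) with hT2d
    have h1 : frobSq (B * T2) ≤ spec B ^ 2 * frobSq T2 := frobSq_mul_le_left B T2
    have h2 : frobSq (B * T2) = frobSq ((1 - P) * (E * Bdag)) := by
      rw [idC, frobSq_conjTranspose, Matrix.mul_assoc]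
    have h3 : frobSq (P * (E * Bdag)) + frobSq ((1 - P) * (E * Bdag)) = frobSq (E * Bdag) :=
      frobSq_proj_left P hPH hP2 (E * Bdag)
    have h4 : frobSq (P * (E * Bdag)) ≤ spec A ^ 2 * frobSq (Adag * E * Bdag) := by
      have : P * (E * Bdag) = A * (Adag * E * Bdag) := by
        rw [hP, Matrix.mul_assoc, Matrix.mul_assoc]
      rw [this]
      exact frobSq_mul_le_left A (Adag * E * Bdag)
    rw [ge_iff_le, div_le_iff₀ (pow_pos sB 2)]
    linarith
  -- term 3
  have hT3 : frobSq ((1 - Q) * F * P) ≥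
      (frobSq (Adag * E) - spec B ^ 2 * frobSq (Adag * E * Bdag)) / spec A ^ 2 := by
    rw [idD]
    set T3 := Bdag * (B * Adag) - Adag with hT3d
    have h1 : frobSq (T3 * A) ≤ frobSq T3 * spec A ^ 2 := frobSq_mul_le_right T3 A
    have h2 : frobSq (T3 * A) = frobSq ((Adag * E) * (1 - Q)) := by
      rw [idE, frobSq_conjTranspose, Matrix.mul_assoc]
    have h3 : frobSq ((Adag * E) * Q) + frobSq ((Adag * E) * (1 - Q)) = frobSq (Adag * E) :=
      frobSq_proj_right Q hQH hQ2 (Adag * E)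
    have h4 : frobSq ((Adag * E) * Q) ≤ frobSq (Adag * E * Bdag) * spec B ^ 2 := by
      have : (Adag * E) * Q = (Adag * E * Bdag) * B := by
        rw [hQ, Matrix.mul_assoc (Adag * E) Bdag B]
      rw [this]
      exact frobSq_mul_le_right (Adag * E * Bdag) B
    rw [ge_iff_le, div_le_iff₀ (pow_pos sA 2)]
    linarith
  linarith [hlow, hT1, hT2, hT3]

end Key

theorem stmt9 {m n : ℕ}
    (A B : Matrix (Fin m) (Fin n) ℂ)
    (Adag Bdag : Matrix (Fin n) (Fin m) ℂ)
    (hA : IsMoorePenrose A Adag) (hB : IsMoorePenrose B Bdag)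
    (E : Matrix (Fin m) (Fin n) ℂ) (hE : E = B - A)
    (hA0 : A ≠ 0) (hB0 : B ≠ 0)
    :
    frobSq (Bdag - Adag) ≥
      max
        ((frobSq (Adag * E) - spec B ^ 2 * frobSq (Adag * E * Bdag)) / spec A ^ 2
          + (frobSq (E * Bdag) - spec A ^ 2 * frobSq (Adag * E * Bdag)) / spec B ^ 2
          + frobSq (Bdag * E * Adag))
        ((frobSq (E * Adag) - spec B ^ 2 * frobSq (Bdag * E * Adag)) / spec A ^ 2
          + (frobSq (Bdag * E) - spec A ^ 2 * frobSq (Bdag * E * Adag)) / spec B ^ 2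
          + frobSq (Adag * E * Bdag)) := by
  rw [ge_iff_le, max_le_iff]
  constructor
  · exact key_branch A B Adag Bdag hA hB E hE hA0 hB0
  · -- apply key_branch with roles swapped
    have h := key_branch B A Bdag Adag hB hA (-E) (by rw [hE]; abel) hB0 hA0
    have e1 : frobSq (Adag - Bdag) = frobSq (Bdag - Adag) := by
      rw [show Adag - Bdag = -(Bdag - Adag) by abel, frobSq_neg]
    have e2 : frobSq (Bdag * -E) = frobSq (Bdag * E) := by
      rw [Matrix.mul_neg, frobSq_neg]
    have e3 : frobSq (Bdag * -E * Adag) = frobSq (Bdag * E * Adag) := by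
      rw [Matrix.mul_neg, Matrix.neg_mul, frobSq_neg]
    have e4 : frobSq (-E * Adag) = frobSq (E * Adag) := by
      rw [Matrix.neg_mul, frobSq_neg]
    have e5 : frobSq (Adag * -E * Bdag) = frobSq (Adag * E * Bdag) := by
      rw [Matrix.mul_neg, Matrix.neg_mul, frobSq_neg]
    rw [e1, e2, e3, e4, e5] at h
    linarith [h]
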